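/- Let m : G × G/N → B(H) be a map such that m(g, z) is a unitary operator on H for every (g, z), the map (g, z) ↦ m(g, z)ξ is Borel measurable G × G/N → H for every ξ ∈ H, and the cocycle identity m(g + h, z) = m(h, z + π(g)) ∘ m(g, z) holds for all g, h ∈ G and z ∈ G/N. Then for every F ∈ L²(G/N; H) and every g ∈ G the function z ↦ m(g, z)(F(z)) again represents an element of L²(G/N; H), and the resulting map G → L²(G/N; H), g ↦ [z ↦ m(g, z)(F(z))], is continuous; equivalently, the map sending g ∈ G to the unitary multiplication operator by m(g, ·) on L²(G/N; H) is continuous for the strong operator topology. -/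

import Mathlib

open MeasureTheory ENNReal Filter Topology

private lemma meas_apply13 {α : Type*} [MeasurableSpace α]
    {H : Type*} [NormedAddCommGroup H] [InnerProductSpace ℂ H]
      [SecondCountableTopology H] [MeasurableSpace H] [BorelSpace H]
    (M : α → (H →L[ℂ] H)) (hM : ∀ ξ : H, Measurable fun a => M a ξ)
    {v : α → H} (hv : Measurable v) :
    Measurable fun a => M a (v a) := by
  classical
  have hsm : MeasureTheory.StronglyMeasurable v := hv.stronglyMeasurable
  have hstep : ∀ s : SimpleFunc α H, Measurable fun a => M a (s a) := by
    intro s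
    induction s using SimpleFunc.induction with
    | @const c sSet hs =>
      have : (fun a => M a ((SimpleFunc.piecewise sSet hs (SimpleFunc.const α c)
          (SimpleFunc.const α 0)) a)) =
          Set.piecewise sSet (fun a => M a c) (fun _ => 0) := by
        ext a
        by_cases h : a ∈ sSet <;>
          simp [SimpleFunc.piecewise_apply, Set.piecewise, h]
      rw [this]
      exact Measurable.piecewise hs (hM c) measurable_const
    | @add f g _ hf hg =>
      have : (fun a => M a ((f + g) a)) = fun a => M a (f a) + M a (g a) := by
        ext a; simp
      rw [this]; exact hf.add hg
  refine measurable_of_tendsto_metrizable (fun n => hstep (hsm.approx n)) ?_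
  rw [tendsto_pi_nhds]
  intro a
  exact ((M a).continuous.tendsto (v a)).comp (hsm.tendsto_approx a)

private lemma key13 {G : Type*} [AddCommGroup G] [TopologicalSpace G] [IsTopologicalAddGroup G]
      [LocallyCompactSpace G] [SecondCountableTopology G] [T2Space G]
      [MeasurableSpace G] [BorelSpace G]
    (N : AddSubgroup G) [DiscreteTopology N] [CompactSpace (G ⧸ N)]
    [MeasurableSpace (G ⧸ N)] [BorelSpace (G ⧸ N)]
    (μ : Measure (G ⧸ N)) [μ.IsAddHaarMeasure]
    {H : Type*} [NormedAddCommGroup H] [InnerProductSpace ℂ H] [CompleteSpace H]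
      [SecondCountableTopology H] [MeasurableSpace H] [BorelSpace H]
    (m : G → (G ⧸ N) → (H →L[ℂ] H))
    (hunit : ∀ (g : G) (z : G ⧸ N), m g z ∈ unitary (H →L[ℂ] H))
    (hmeas : ∀ ξ : H, Measurable fun p : G × (G ⧸ N) => m p.1 p.2 ξ)
    (hcoc : ∀ (g h : G) (z : G ⧸ N),
      m (g + h) z = (m h (z + (g : G ⧸ N))).comp (m g z))
    (F : Lp H 2 μ) {ε : ℝ≥0∞} (hε : 0 < ε) (hεtop : ε ≠ ∞) :
    ∀ᶠ g in 𝓝 (0 : G), eLpNorm (fun z => m g z (F z) - F z) 2 μ < ε := by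
  classical
  haveI : Fact ((1:ℝ≥0∞) ≤ 2) := ⟨one_le_two⟩
  haveI : Fact ((2:ℝ≥0∞) ≠ ∞) := ⟨by norm_num⟩
  haveI : SecondCountableTopology (Lp H 2 μ) := MeasureTheory.Lp.SecondCountableTopology
  -- measurable representative of F
  obtain ⟨f, hfsm, hfe⟩ : ∃ f : (G ⧸ N) → H, StronglyMeasurable f ∧ (⇑F : (G ⧸ N) → H) =ᵐ[μ] f :=
    ⟨(Lp.aestronglyMeasurable F).mk _, (Lp.aestronglyMeasurable F).stronglyMeasurable_mk,
      (Lp.aestronglyMeasurable F).ae_eq_mk⟩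
  have hf : Measurable f := hfsm.measurable
  -- the L² norm via lintegral of square
  have hLp2 : ∀ u : (G ⧸ N) → H,
      eLpNorm u 2 μ = (∫⁻ z, (‖u z‖₊ : ℝ≥0∞) ^ (2:ℕ) ∂μ) ^ (1/2 : ℝ) := by
    intro u
    rw [eLpNorm_eq_lintegral_rpow_enorm_toReal (by norm_num) (by norm_num)]
    simp only [ENNReal.toReal_ofNat]
    congr 1
    refine lintegral_congr fun z => ?_
    rw [← ENNReal.rpow_natCast]
    norm_num
    rfl
  -- unitaries preserve the norm
  have hnn : ∀ (g : G) (z : G ⧸ N) (v : H), ‖m g z v‖₊ = ‖v‖₊ := fun g z v =>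
    NNReal.eq ((m g z).norm_map_of_mem_unitary (hunit g z) v)
  -- `m 0 z = 1`
  have hone : ∀ z : G ⧸ N, m 0 z = 1 := by
    intro z
    have h : m 0 z = (m 0 z).comp (m 0 z) := by
      have h' := hcoc 0 0 z
      rw [add_zero] at h'
      convert h' using 3
      · exact (add_zero z).symm.trans (by norm_num)
    have hmul : m 0 z * m 0 z = m 0 z := by
      rw [ContinuousLinearMap.mul_def]; exact h.symm
    have hu : star (m 0 z) * m 0 z = 1 := (Unitary.mem_iff.mp (hunit 0 z)).1
    calc m 0 z = 1 * m 0 z := (one_mul _).symm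
      _ = star (m 0 z) * m 0 z * m 0 z := by rw [hu]
      _ = star (m 0 z) * (m 0 z * m 0 z) := by rw [mul_assoc]
      _ = star (m 0 z) * m 0 z := by rw [hmul]
      _ = 1 := hu
  -- the homomorphism version of the cocycle
  set φ : G → (G ⧸ N) → H := fun g z => m g (z - (g : G ⧸ N)) (f (z - (g : G ⧸ N))) with hφdef
  have hcoe : Measurable fun g : G => (g : G ⧸ N) := continuous_quotient_mk'.measurable
  have hφm : Measurable fun p : G × (G ⧸ N) => φ p.1 p.2 := by
    refine meas_apply13 (fun p : G × (G ⧸ N) => m p.1 (p.2 - (p.1 : G ⧸ N))) ?_ ?_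
    · intro ξ
      exact (hmeas ξ).comp (measurable_fst.prodMk
        (measurable_snd.sub (hcoe.comp measurable_fst)))
    · exact hf.comp (measurable_snd.sub (hcoe.comp measurable_fst))
  have hφg : ∀ g : G, Measurable (φ g) := fun g =>
    hφm.comp (measurable_const.prodMk measurable_id)
  have hφ0 : φ 0 = f := by
    funext z
    have h0 : ((0 : G) : G ⧸ N) = 0 := rfl
    simp only [hφdef, h0, sub_zero, hone, ContinuousLinearMap.one_apply]
  have hφadd : ∀ (g h : G) (z : G ⧸ N),
      φ (g + h) z = m h (z - (h : G ⧸ N)) (φ g (z - (h : G ⧸ N))) := by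
    intro g h z
    have hgh : ((g + h : G) : G ⧸ N) = (g : G ⧸ N) + (h : G ⧸ N) := rfl
    have h1 : z - ((g : G ⧸ N) + (h : G ⧸ N)) + (g : G ⧸ N) = z - (h : G ⧸ N) := by abel
    have h2 : z - ((g : G ⧸ N) + (h : G ⧸ N)) = z - (h : G ⧸ N) - (g : G ⧸ N) := by abel
    show m (g + h) (z - ((g + h : G) : G ⧸ N)) (f (z - ((g + h : G) : G ⧸ N))) = _
    rw [hgh, hcoc g h (z - ((g : G ⧸ N) + (h : G ⧸ N))), ContinuousLinearMap.comp_apply, h1]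
    congr 1
    rw [h2]
  -- translation invariance of the L² norm
  have htrans : ∀ (a : G ⧸ N) (u : (G ⧸ N) → H), Measurable u →
      eLpNorm (fun z => u (z - a)) 2 μ = eLpNorm u 2 μ := by
    intro a u hu
    rw [hLp2, hLp2]
    congr 1
    exact (measurePreserving_sub_right μ a).lintegral_comp
      ((hu.nnnorm.coe_nnreal_ennreal).pow_const 2)
  -- invariance of the distance for φ
  have hdinv : ∀ (g h k : G),
      eLpNorm (fun z => φ (g + k) z - φ (h + k) z) 2 μ
        = eLpNorm (fun z => φ g z - φ h z) 2 μ := by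
    intro g h k
    have hmeasu : Measurable fun z => φ g z - φ h z := (hφg g).sub (hφg h)
    have hpt : (fun z => φ (g + k) z - φ (h + k) z)
        = fun z => m k (z - (k : G ⧸ N)) ((fun w => φ g w - φ h w) (z - (k : G ⧸ N))) := by
      funext z
      rw [hφadd g k z, hφadd h k z, ← map_sub]
    rw [hpt, hLp2, hLp2]
    congr 1
    have : ∀ z : G ⧸ N,
        (‖m k (z - (k : G ⧸ N)) ((fun w => φ g w - φ h w) (z - (k : G ⧸ N)))‖₊ : ℝ≥0∞) ^ (2:ℕ)
        = (fun w => (‖φ g w - φ h w‖₊ : ℝ≥0∞) ^ (2:ℕ)) (z - (k : G ⧸ N)) := by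
      intro z; rw [hnn]
    rw [lintegral_congr this]
    exact (measurePreserving_sub_right μ _).lintegral_comp
      ((hmeasu.nnnorm.coe_nnreal_ennreal).pow_const 2)
  -- membership in L²
  have hφnorm : ∀ g : G, eLpNorm (φ g) 2 μ = eLpNorm f 2 μ := by
    intro g
    have : eLpNorm (φ g) 2 μ = eLpNorm (fun z => f (z - (g : G ⧸ N))) 2 μ := by
      rw [hLp2, hLp2]
      congr 1
      exact lintegral_congr fun z => by rw [hnn]
    rw [this, htrans _ f hf]
  have hmem : ∀ g : G, MemLp (φ g) 2 μ := by
    intro g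
    refine ⟨(hφg g).aestronglyMeasurable, ?_⟩
    rw [hφnorm g, ← eLpNorm_congr_ae hfe]
    exact Lp.eLpNorm_lt_top F
  set Tg : G → Lp H 2 μ := fun g => (hmem g).toLp (φ g) with hTgdef
  -- half of epsilon, twice
  set δ : ℝ≥0∞ := ε / 2 / 2 with hδdef
  have hε2pos : 0 < ε / 2 := ENNReal.half_pos hε.ne'
  have hδpos : 0 < δ := ENNReal.half_pos hε2pos.ne'
  -- Steinhaus part: eventually `‖φ g - f‖₂ < ε/2`
  have hS : ∀ᶠ g in 𝓝 (0 : G), eLpNorm (fun z => φ g z - f z) 2 μ < ε / 2 := by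
    -- Haar measure on G
    have K0 : TopologicalSpace.PositiveCompacts G := Classical.choice inferInstance
    set σ : Measure G := Measure.addHaarMeasure K0 with hσdef
    -- countable dense set
    obtain ⟨D, hDc, hDdense⟩ := TopologicalSpace.exists_countable_dense (Lp H 2 μ)
    -- measurable representatives of elements of D
    set cm : Lp H 2 μ → ((G ⧸ N) → H) := fun c => (Lp.aestronglyMeasurable c).mk _ with hcmdef
    have hcm : ∀ c, Measurable (cm c) := fun c =>
      (Lp.aestronglyMeasurable c).stronglyMeasurable_mk.measurable
    have hcme : ∀ c : Lp H 2 μ, (⇑c : (G ⧸ N) → H) =ᵐ[μ] cm c := fun c =>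
      (Lp.aestronglyMeasurable c).ae_eq_mk
    set A : Lp H 2 μ → Set G := fun c => {g | eLpNorm (fun z => φ g z - cm c z) 2 μ < δ}
      with hAdef
    have hAc : ∀ c, MeasurableSet (A c) := by
      intro c
      have hjoint : Measurable fun p : G × (G ⧸ N) =>
          ((‖φ p.1 p.2 - cm c p.2‖₊ : ℝ≥0∞)) ^ (2:ℕ) :=
        (((hφm.sub ((hcm c).comp measurable_snd)).nnnorm).coe_nnreal_ennreal).pow_const 2
      have hlin : Measurable fun g : G =>
          ∫⁻ z, (‖φ g z - cm c z‖₊ : ℝ≥0∞) ^ (2:ℕ) ∂μ := hjoint.lintegral_prod_right'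
      have hmeasd : Measurable fun g : G => eLpNorm (fun z => φ g z - cm c z) 2 μ := by
        simp only [hLp2]
        exact (ENNReal.continuous_rpow_const.measurable).comp hlin
      exact measurableSet_lt hmeasd measurable_const
    have hcov : ∀ g : G, ∃ c ∈ D, g ∈ A c := by
      intro g
      obtain ⟨c, hcD, hc⟩ := EMetric.mem_closure_iff.mp (hDdense (Tg g)) δ hδpos
      refine ⟨c, hcD, ?_⟩
      have hcongr : (⇑(Tg g) - ⇑c : (G ⧸ N) → H) =ᵐ[μ] fun z => φ g z - cm c z := by
        filter_upwards [(hmem g).coeFn_toLp, hcme c] with z h1 h2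
        simp only [Pi.sub_apply, hTgdef, h1, h2]
      have : edist (Tg g) c = eLpNorm (fun z => φ g z - cm c z) 2 μ := by
        rw [Lp.edist_def, eLpNorm_congr_ae hcongr]
      rw [hAdef]
      exact Set.mem_setOf.mpr (by rw [← this]; exact hc)
    -- find a set of positive Haar measure
    have hex : ∃ c ∈ D, σ (A c) ≠ 0 := by
      by_contra h
      push_neg at h
      have hnull : σ (⋃ c ∈ D, A c) = 0 := (measure_biUnion_null_iff hDc).mpr h
      have hcover : (Set.univ : Set G) ⊆ ⋃ c ∈ D, A c := by
        intro g _
        obtain ⟨c, hc, hg⟩ := hcov g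
        exact Set.mem_biUnion hc hg
      have huniv : σ (Set.univ : Set G) = 0 := measure_mono_null hcover hnull
      exact absurd huniv (isOpen_univ.measure_pos σ Set.univ_nonempty).ne'
    obtain ⟨c, _, hcpos⟩ := hex
    have hsub := Measure.sub_mem_nhds_zero_of_addHaar_pos σ (A c) (hAc c)
      (pos_iff_ne_zero.mpr hcpos)
    refine Filter.mem_of_superset hsub ?_
    intro g hg
    rw [Set.mem_sub] at hg
    obtain ⟨x, hx, y, hy, hxy⟩ := hg
    -- compute the distance
    have hgx : g + y = x := by rw [← hxy]; abel
    have h1 : eLpNorm (fun z => φ g z - f z) 2 μ = eLpNorm (fun z => φ x z - φ y z) 2 μ := by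
      conv_lhs => rw [← hφ0]
      rw [← hdinv g 0 y, hgx, zero_add]
    have htri : eLpNorm (fun z => φ x z - φ y z) 2 μ
        ≤ eLpNorm (fun z => φ x z - cm c z) 2 μ + eLpNorm (fun z => φ y z - cm c z) 2 μ := by
      have hsplit : (fun z => φ x z - φ y z)
          = (fun z => φ x z - cm c z) + fun z => cm c z - φ y z := by
        funext z; simp only [Pi.add_apply]; abel
      have hswap : eLpNorm (fun z => cm c z - φ y z) 2 μ
          = eLpNorm (fun z => φ y z - cm c z) 2 μ := by
        have : (fun z => cm c z - φ y z) = -fun z => φ y z - cm c z := by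
          funext z; simp [neg_sub]
        rw [this, eLpNorm_neg]
      calc eLpNorm (fun z => φ x z - φ y z) 2 μ
          ≤ eLpNorm (fun z => φ x z - cm c z) 2 μ + eLpNorm (fun z => cm c z - φ y z) 2 μ := by
            rw [hsplit]
            exact eLpNorm_add_le (((hφg x).sub (hcm c)).aestronglyMeasurable)
              (((hcm c).sub (hφg y)).aestronglyMeasurable) one_le_two
        _ = _ := by rw [hswap]
    have hlt : eLpNorm (fun z => φ x z - cm c z) 2 μ + eLpNorm (fun z => φ y z - cm c z) 2 μ
        < δ + δ := ENNReal.add_lt_add hx hy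
    have : eLpNorm (fun z => φ g z - f z) 2 μ < δ + δ := by
      rw [h1]; exact lt_of_le_of_lt htri hlt
    rwa [hδdef, ENNReal.add_halves] at this
  -- Translation part: eventually `‖f(· - g) - f‖₂ < ε/2`
  have hT : ∀ᶠ g : G in 𝓝 (0 : G), eLpNorm (fun z => f z - f ((z : G ⧸ N) - (g : G ⧸ N))) 2 μ < ε / 2 := by
    have hc : Continuous fun p : G × (G ⧸ N) => p.2 - (p.1 : G ⧸ N) :=
      continuous_snd.sub (continuous_quotient_mk'.comp continuous_fst)
    set τ : C(G, C(G ⧸ N, G ⧸ N)) := ContinuousMap.curry ⟨_, hc⟩ with hτdef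
    have hτmp : ∀ g : G, MeasurePreserving (τ g) μ μ := fun g =>
      measurePreserving_sub_right μ (g : G ⧸ N)
    set Γ : G → Lp H 2 μ := fun g => Lp.compMeasurePreserving (τ g) (hτmp g) F with hΓdef
    have hΓ0 : Γ 0 = F := by
      refine Lp.ext ?_
      refine (Lp.coeFn_compMeasurePreserving F (hτmp 0)).trans ?_
      have : (⇑F ∘ ⇑(τ 0) : (G ⧸ N) → H) = ⇑F := by
        funext z
        show F (z - ((0:G) : G ⧸ N)) = F z
        have h0 : ((0 : G) : G ⧸ N) = 0 := rfl
        rw [h0, sub_zero]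
      rw [this]
    have hΓcont : Tendsto Γ (𝓝 0) (𝓝 F) := by
      rw [← hΓ0]
      refine Filter.Tendsto.compMeasurePreservingLp tendsto_const_nhds ?_ hτmp (hτmp 0)
        (by norm_num)
      exact (τ.continuous.tendsto 0)
    have hev := EMetric.tendsto_nhds.mp hΓcont (ε / 2) hε2pos
    filter_upwards [hev] with g hg
    have hcongr : (⇑(Γ g) - ⇑F : (G ⧸ N) → H) =ᵐ[μ] fun z => f (z - (g : G ⧸ N)) - f z := by
      have h1 : (⇑(Γ g) : (G ⧸ N) → H) =ᵐ[μ] ⇑F ∘ ⇑(τ g) :=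
        Lp.coeFn_compMeasurePreserving F (hτmp g)
      have h2 : (⇑F ∘ ⇑(τ g) : (G ⧸ N) → H) =ᵐ[μ] f ∘ ⇑(τ g) :=
        (hτmp g).quasiMeasurePreserving.ae_eq_comp hfe
      filter_upwards [h1, h2, hfe] with z hz1 hz2 hz3
      have : (⇑(τ g) : (G ⧸ N) → (G ⧸ N)) z = z - (g : G ⧸ N) := rfl
      simp only [Pi.sub_apply, hz1, hz3]
      rw [show (⇑F ∘ ⇑(τ g)) z = f (z - (g : G ⧸ N)) from by
        rw [hz2]; simp [Function.comp, this]]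
    have heq : edist (Γ g) F = eLpNorm (fun z => f (z - (g : G ⧸ N)) - f z) 2 μ := by
      rw [Lp.edist_def, eLpNorm_congr_ae hcongr]
    have hswap : eLpNorm (fun z => f z - f (z - (g : G ⧸ N))) 2 μ
        = eLpNorm (fun z => f (z - (g : G ⧸ N)) - f z) 2 μ := by
      have : (fun z => f z - f (z - (g : G ⧸ N))) = -fun z => f (z - (g : G ⧸ N)) - f z := by
        funext z; simp [neg_sub]
      rw [this, eLpNorm_neg]
    rw [hswap, ← heq]
    exact hg
  -- combine
  filter_upwards [hS, hT] with g hg1 hg2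
  have hψm : Measurable fun z => m g z (f z) := by
    refine meas_apply13 (fun z : G ⧸ N => m g z) (fun ξ => ?_) hf
    exact (hmeas ξ).comp (measurable_const.prodMk measurable_id)
  have hcongr : eLpNorm (fun z => m g z (F z) - F z) 2 μ
      = eLpNorm (fun z => m g z (f z) - f z) 2 μ := by
    refine eLpNorm_congr_ae ?_
    filter_upwards [hfe] with z hz
    rw [hz]
  have hsubst : eLpNorm (fun z => m g z (f z) - f z) 2 μ
      = eLpNorm (fun z => φ g z - f (z - (g : G ⧸ N))) 2 μ := by
    have := htrans (g : G ⧸ N) (fun z => m g z (f z) - f z) (hψm.sub hf)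
    rw [← this]
  have htri : eLpNorm (fun z => φ g z - f (z - (g : G ⧸ N))) 2 μ
      ≤ eLpNorm (fun z => φ g z - f z) 2 μ
        + eLpNorm (fun z => f z - f (z - (g : G ⧸ N))) 2 μ := by
    have hsplit : (fun z => φ g z - f (z - (g : G ⧸ N)))
        = (fun z => φ g z - f z) + fun z => f z - f (z - (g : G ⧸ N)) := by
      funext z; simp only [Pi.add_apply]; abel
    rw [hsplit]
    exact eLpNorm_add_le (((hφg g).sub hf).aestronglyMeasurable)
      ((hf.sub (hf.comp (measurable_id.sub_const _))).aestronglyMeasurable) one_le_two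
  calc eLpNorm (fun z => m g z (F z) - F z) 2 μ
      = eLpNorm (fun z => φ g z - f (z - (g : G ⧸ N))) 2 μ := by rw [hcongr, hsubst]
    _ ≤ _ := htri
    _ < ε / 2 + ε / 2 := ENNReal.add_lt_add hg1 hg2
    _ = ε := ENNReal.add_halves ε

theorem statement13
    {G : Type*} [AddCommGroup G] [TopologicalSpace G] [IsTopologicalAddGroup G]
      [LocallyCompactSpace G] [SecondCountableTopology G] [T2Space G]
      [MeasurableSpace G] [BorelSpace G]
    (N : AddSubgroup G) [DiscreteTopology N] [CompactSpace (G ⧸ N)]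
    [MeasurableSpace (G ⧸ N)] [BorelSpace (G ⧸ N)]
    (μ : Measure (G ⧸ N)) [μ.IsAddHaarMeasure]
    {H : Type*} [NormedAddCommGroup H] [InnerProductSpace ℂ H] [CompleteSpace H]
      [SecondCountableTopology H] [MeasurableSpace H] [BorelSpace H]
    (m : G → (G ⧸ N) → (H →L[ℂ] H))
    (hunit : ∀ (g : G) (z : G ⧸ N), m g z ∈ unitary (H →L[ℂ] H))
    (hmeas : ∀ ξ : H, Measurable fun p : G × (G ⧸ N) => m p.1 p.2 ξ)
    (hcoc : ∀ (g h : G) (z : G ⧸ N),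
      m (g + h) z = (m h (z + (g : G ⧸ N))).comp (m g z)) :
    ∀ F : Lp H 2 μ, ∃ T : G → Lp H 2 μ,
      (∀ g : G, (T g : (G ⧸ N) → H) =ᵐ[μ] fun z => m g z (F z)) ∧
      Continuous T := by
  intro F
  haveI : Fact ((1:ℝ≥0∞) ≤ 2) := ⟨one_le_two⟩
  obtain ⟨f, hfsm, hfe⟩ : ∃ f : (G ⧸ N) → H, StronglyMeasurable f ∧ (⇑F : (G ⧸ N) → H) =ᵐ[μ] f :=
    ⟨(Lp.aestronglyMeasurable F).mk _, (Lp.aestronglyMeasurable F).stronglyMeasurable_mk,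
      (Lp.aestronglyMeasurable F).ae_eq_mk⟩
  have hf : Measurable f := hfsm.measurable
  have hmemg : ∀ g : G, MemLp (fun z => m g z (F z)) 2 μ := by
    intro g
    have hψm : Measurable fun z => m g z (f z) := by
      refine meas_apply13 (fun z : G ⧸ N => m g z) (fun ξ => ?_) hf
      exact (hmeas ξ).comp (measurable_const.prodMk measurable_id)
    have hψ : AEStronglyMeasurable (fun z => m g z (F z)) μ := by
      refine hψm.aestronglyMeasurable.congr ?_
      filter_upwards [hfe] with z hz
      rw [hz]
    refine MemLp.of_le (Lp.memLp F) hψ ?_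
    exact Filter.Eventually.of_forall fun z =>
      le_of_eq ((m g z).norm_map_of_mem_unitary (hunit g z) _)
  refine ⟨fun g => (hmemg g).toLp _, fun g => (hmemg g).coeFn_toLp, ?_⟩
  rw [continuous_iff_continuousAt]
  intro g₀
  rw [ContinuousAt]
  rw [EMetric.tendsto_nhds]
  intro ε hε
  set ε' : ℝ≥0∞ := min ε 1 with hε'def
  have hε'pos : 0 < ε' := lt_min hε zero_lt_one
  have hε'top : ε' ≠ ∞ := ne_top_of_le_ne_top one_ne_top (min_le_right _ _)
  have hmain : ∀ᶠ g in 𝓝 g₀,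
      edist ((hmemg g).toLp _) ((hmemg g₀).toLp _) < ε' := by
    set a : G ⧸ N := (g₀ : G ⧸ N) with hadef
    set m' : G → (G ⧸ N) → (H →L[ℂ] H) := fun h z => m h (z + a) with hm'def
    have hunit' : ∀ (g : G) (z : G ⧸ N), m' g z ∈ unitary (H →L[ℂ] H) := fun g z => hunit g _
    have hmeas' : ∀ ξ : H, Measurable fun p : G × (G ⧸ N) => m' p.1 p.2 ξ := fun ξ =>
      (hmeas ξ).comp (measurable_fst.prodMk (measurable_snd.add_const a))
    have hcoc' : ∀ (g h : G) (z : G ⧸ N),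
        m' (g + h) z = (m' h (z + (g : G ⧸ N))).comp (m' g z) := by
      intro g h z
      show m (g + h) (z + a) = (m h (z + (g : G ⧸ N) + a)).comp (m g (z + a))
      rw [hcoc g h (z + a)]
      congr 2
      exact add_right_comm z a (g : G ⧸ N)
    have hkey := key13 N μ m' hunit' hmeas' hcoc' ((hmemg g₀).toLp _) hε'pos hε'top
    have hshift : Tendsto (fun g : G => g - g₀) (𝓝 g₀) (𝓝 0) := by
      have hc : Continuous fun g : G => g - g₀ := continuous_id.sub continuous_const
      have := hc.tendsto g₀
      simpa using this
    filter_upwards [hshift.eventually hkey] with g hg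
    rw [Lp.edist_def]
    have hcongr : (⇑((hmemg g).toLp _) - ⇑((hmemg g₀).toLp _) : (G ⧸ N) → H)
        =ᵐ[μ] fun z => m' (g - g₀) z (((hmemg g₀).toLp _ : Lp H 2 μ) z)
          - ((hmemg g₀).toLp _ : Lp H 2 μ) z := by
      filter_upwards [(hmemg g).coeFn_toLp, (hmemg g₀).coeFn_toLp] with z h1 h2
      have hgsum : g₀ + (g - g₀) = g := by abel
      have hx : m g z (F z) = m' (g - g₀) z (m g₀ z (F z)) := by
        show m g z (F z) = m (g - g₀) (z + a) (m g₀ z (F z))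
        conv_lhs => rw [← hgsum]
        rw [hcoc g₀ (g - g₀) z, ContinuousLinearMap.comp_apply]
      simp only [Pi.sub_apply, h1, h2, hx]
    rw [eLpNorm_congr_ae hcongr]
    exact hg
  filter_upwards [hmain] with g hg
  exact lt_of_lt_of_le hg (min_le_left _ _)
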